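/- Let X be a Banach space. If X is almost square (ASQ), then X has the sequential SD2P. -/
import Mathlib


open Filter Topology

/-- A sequence in a Banach space is equivalent to the canonical basis of `c₀`. -/
def IsEquivC0Basis {X : Type*} [NormedAddCommGroup X] [NormedSpace ℝ X] (x : ℕ → X) : Prop :=
  ∃ a b : ℝ, 0 < a ∧ a ≤ b ∧ ∀ (n : ℕ) (l : Fin n → ℝ),
    a * (⨆ i, |l i|) ≤ ‖∑ i, l i • x (i : ℕ)‖ ∧
    ‖∑ i, l i • x (i : ℕ)‖ ≤ b * (⨆ i, |l i|)

/-- The sequential strong diameter two property. -/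
def SeqSD2P (X : Type*) [NormedAddCommGroup X] [NormedSpace ℝ X] : Prop :=
  ∀ (m : ℕ) (x : Fin m → X), (∀ i, ‖x i‖ = 1) →
    ∃ (y : Fin m → ℕ → X) (z : ℕ → X),
      (∀ i n, ‖y i n‖ = 1) ∧ (∀ n, ‖z n‖ = 1) ∧
      (∀ i, Tendsto (fun n => ‖x i - y i n‖) atTop (𝓝 0) ∨
        IsEquivC0Basis (fun n => x i - y i n)) ∧
      IsEquivC0Basis z ∧
      (∀ i, Tendsto (fun n => ‖y i n + z n‖) atTop (𝓝 1) ∧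
        Tendsto (fun n => ‖y i n - z n‖) atTop (𝓝 1))

/-- `P : X → ℝ` is a continuous `N`-homogeneous polynomial. -/
def IsHomogPoly {X : Type*} [NormedAddCommGroup X] [NormedSpace ℝ X]
    (N : ℕ) (P : X → ℝ) : Prop :=
  ∃ A : ContinuousMultilinearMap ℝ (fun _ : Fin N => X) ℝ, ∀ x, P x = A (fun _ => x)

/-- The norm of a polynomial: its supremum on the closed unit ball. -/
noncomputable def polyNorm {X : Type*} [NormedAddCommGroup X] [NormedSpace ℝ X]
    (P : X → ℝ) : ℝ :=
  sSup {r : ℝ | ∃ x : X, ‖x‖ ≤ 1 ∧ r = |P x|}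

/-- A Banach space is almost square (ASQ). -/
def ASQ (X : Type*) [NormedAddCommGroup X] [NormedSpace ℝ X] : Prop :=
  ∀ (k : ℕ) (x : Fin k → X), (∀ i, ‖x i‖ = 1) →
    ∃ y : ℕ → X, (∀ n, ‖y n‖ ≤ 1) ∧ Tendsto (fun n => ‖y n‖) atTop (𝓝 1) ∧
      ∀ i, Tendsto (fun n => ‖x i + y n‖) atTop (𝓝 1) ∧
        Tendsto (fun n => ‖x i - y n‖) atTop (𝓝 1)

lemma csup_nonneg {k : ℕ} (l : Fin k → ℝ) : 0 ≤ ⨆ i, |l i| :=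
  Real.iSup_nonneg fun _ => abs_nonneg _

lemma le_csup {k : ℕ} (l : Fin k → ℝ) (i : Fin k) : |l i| ≤ ⨆ j, |l j| :=
  le_ciSup (f := fun j => |l j|) (Set.Finite.bddAbove (Set.finite_range _)) i

lemma csup_le {k : ℕ} {l : Fin k → ℝ} {c : ℝ} (hc : 0 ≤ c) (h : ∀ i, |l i| ≤ c) :
    (⨆ i, |l i|) ≤ c := Real.iSup_le h hc

lemma csup_succ {n : ℕ} (l : Fin (n+1) → ℝ) :
    (⨆ i, |l i|) = max (⨆ i : Fin n, |l i.castSucc|) |l (Fin.last n)| := by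
  apply le_antisymm
  · apply csup_le (le_trans (abs_nonneg _) (le_max_right _ _))
    intro i
    induction i using Fin.lastCases with
    | last => exact le_max_right _ _
    | cast j => exact le_trans (le_csup (fun i : Fin n => l i.castSucc) j) (le_max_left _ _)
  · exact max_le (csup_le (csup_nonneg l) fun i => le_csup l i.castSucc) (le_csup l _)

lemma csup_smul {k : ℕ} (l : Fin k → ℝ) {c : ℝ} (hc : 0 ≤ c) :
    (⨆ i, |c * l i|) = c * ⨆ i, |l i| := by
  rcases hc.eq_or_lt with h | h
  · subst h; simp only [zero_mul, abs_zero]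
    rcases Nat.eq_zero_or_pos k with hk | hk
    · subst hk; simp
    · haveI : Nonempty (Fin k) := ⟨⟨0, hk⟩⟩; simp [ciSup_const]
  · apply le_antisymm
    · apply csup_le (mul_nonneg hc (csup_nonneg l))
      intro i
      rw [abs_mul, abs_of_pos h]
      exact mul_le_mul_of_nonneg_left (le_csup l i) hc
    · have key : (⨆ i, |l i|) ≤ c⁻¹ * ⨆ i, |c * l i| := by
        apply csup_le (mul_nonneg (by positivity) (csup_nonneg _))
        intro i
        rw [le_inv_mul_iff₀ h]
        calc c * |l i| = |c * l i| := by rw [abs_mul, abs_of_pos h]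
          _ ≤ _ := le_csup (fun j => c * l j) i
      calc c * ⨆ i, |l i| ≤ c * (c⁻¹ * ⨆ i, |c * l i|) :=
            mul_le_mul_of_nonneg_left key hc
        _ = ⨆ i, |c * l i| := by field_simp

lemma grid_lemma {δ : ℝ} (hδ : 0 < δ) : ∃ G : Finset ℝ, ∀ s : ℝ, |s| ≤ 1 →
    ∃ g ∈ G, |s - g| ≤ δ := by
  refine ⟨(Finset.Icc (-⌈δ⁻¹⌉) ⌈δ⁻¹⌉).image (fun j : ℤ => δ * j), fun s hs => ?_⟩
  have hs1 : s ≤ 1 := le_trans (le_abs_self s) hs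
  have hs2 : -1 ≤ s := by linarith [neg_abs_le s]
  have hup : s / δ ≤ δ⁻¹ := by
    rw [div_le_iff₀ hδ, inv_mul_cancel₀ hδ.ne']; exact hs1
  have hlo : -δ⁻¹ ≤ s / δ := by
    rw [neg_le, ← neg_div, div_le_iff₀ hδ, inv_mul_cancel₀ hδ.ne']; linarith
  refine ⟨δ * ⌊s / δ⌋, Finset.mem_image.2 ⟨⌊s / δ⌋, Finset.mem_Icc.2 ⟨?_, ?_⟩, rfl⟩, ?_⟩
  · rw [neg_le, ← Int.ceil_neg]
    exact Int.ceil_le_ceil (by linarith)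
  · exact le_trans (Int.floor_le_floor hup) (Int.floor_le_ceil _)
  · have h1 : δ * ⌊s / δ⌋ ≤ s := by
      rw [mul_comm, ← le_div_iff₀ hδ]; exact Int.floor_le _
    have h2 : s < δ * ⌊s / δ⌋ + δ := by
      have := Int.lt_floor_add_one (s / δ)
      rw [div_lt_iff₀ hδ] at this
      linarith [this]
    rw [abs_of_nonneg (by linarith)]; linarith

lemma twoVec {X : Type*} [NormedAddCommGroup X] [NormedSpace ℝ X] {u z : X} {ε : ℝ}
    (hε : 0 ≤ ε) (hu : u ≠ 0) (hz : ‖z‖ = 1)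
    (hp : ‖‖u‖⁻¹ • u + z‖ ≤ 1 + ε) (hm : ‖‖u‖⁻¹ • u - z‖ ≤ 1 + ε) (t : ℝ) :
    (1 - ε) * max ‖u‖ |t| ≤ ‖u + t • z‖ ∧ ‖u + t • z‖ ≤ (1 + ε) * max ‖u‖ |t| := by
  have hr : 0 < ‖u‖ := norm_pos_iff.2 hu
  set r := ‖u‖ with hrdef
  set v := r⁻¹ • u with hv
  have key : ∀ s : ℝ, ‖v + s • z‖ ≤ (1 + ε) * max 1 |s| := by
    intro s
    rcases le_or_gt |s| 1 with h | h
    · have hid : v + s • z = ((1+s)/2) • (v + z) + ((1-s)/2) • (v - z) := by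
        match_scalars <;> ring
      have hs1 : -1 ≤ s := by linarith [neg_abs_le s]
      have hs2 : s ≤ 1 := le_trans (le_abs_self s) h
      calc ‖v + s • z‖ ≤ ‖((1+s)/2) • (v + z)‖ + ‖((1-s)/2) • (v - z)‖ := by
            rw [hid]; exact norm_add_le _ _
        _ = ((1+s)/2) * ‖v + z‖ + ((1-s)/2) * ‖v - z‖ := by
            rw [norm_smul, norm_smul, Real.norm_eq_abs, Real.norm_eq_abs,
              abs_of_nonneg (by linarith), abs_of_nonneg (by linarith)]
        _ ≤ ((1+s)/2) * (1+ε) + ((1-s)/2) * (1+ε) := by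
            gcongr <;> linarith
        _ = (1+ε) * 1 := by ring
        _ ≤ (1+ε) * max 1 |s| := by gcongr; exact le_max_left _ _
    · set σ : ℝ := if 0 ≤ s then 1 else -1 with hσ
      have hσn : |s - σ| = |s| - 1 := by
        rcases le_or_gt 0 s with h0 | h0
        · rw [hσ, if_pos h0, abs_of_nonneg, abs_of_nonneg h0]
          rw [abs_of_nonneg h0] at h; linarith
        · have hs' : s < -1 := by rw [abs_of_neg h0] at h; linarith
          rw [hσ, if_neg (not_le.2 h0), abs_of_neg h0,
            show s - (-1:ℝ) = s + 1 by ring, abs_of_neg (by linarith : s + (1:ℝ) < 0)]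
          ring
      have hσz : ‖v + σ • z‖ ≤ 1 + ε := by
        rcases le_or_gt 0 s with h0 | h0
        · rw [hσ, if_pos h0, one_smul]; exact hp
        · rw [hσ, if_neg (not_le.2 h0)]
          simpa [sub_eq_add_neg] using hm
      calc ‖v + s • z‖ = ‖(v + σ • z) + (s - σ) • z‖ := by
            congr 1; match_scalars <;> ring
        _ ≤ ‖v + σ • z‖ + ‖(s - σ) • z‖ := norm_add_le _ _
        _ ≤ (1 + ε) + |s - σ| := by
            rw [norm_smul, Real.norm_eq_abs, hz, mul_one]; gcongr
        _ = ε + |s| := by rw [hσn]; ring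
        _ ≤ (1 + ε) * max 1 |s| := by
            rw [max_eq_right h.le]; nlinarith
  have keyU : ∀ t : ℝ, ‖u + t • z‖ ≤ (1 + ε) * max r |t| := by
    intro t
    have hid : u + t • z = r • (v + (t / r) • z) := by
      rw [hv]; match_scalars <;> field_simp
    have : ‖u + t • z‖ = r * ‖v + (t/r) • z‖ := by
      rw [hid, norm_smul, Real.norm_eq_abs, abs_of_pos hr]
    rw [this]
    calc r * ‖v + (t/r) • z‖ ≤ r * ((1 + ε) * max 1 |t/r|) := by
          exact mul_le_mul_of_nonneg_left (key _) hr.le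
      _ = (1 + ε) * (r * max 1 (|t| / r)) := by rw [abs_div, abs_of_pos hr]; ring
      _ = (1 + ε) * max r |t| := by
          congr 1
          rw [mul_max_of_nonneg _ _ hr.le, mul_one, mul_div_cancel₀ _ hr.ne']
  constructor
  · have h1 : 2 * r ≤ ‖u + t • z‖ + ‖u - t • z‖ := by
      calc 2 * r = ‖(u + t • z) + (u - t • z)‖ := by
            rw [show (u + t • z) + (u - t • z) = (2:ℝ) • u by match_scalars <;> ring,
              norm_smul]; simp [hrdef]
        _ ≤ _ := norm_add_le _ _
    have h2 : 2 * |t| ≤ ‖u + t • z‖ + ‖u - t • z‖ := by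
      calc 2 * |t| = ‖(u + t • z) - (u - t • z)‖ := by
            rw [show (u + t • z) - (u - t • z) = (2*t) • z by match_scalars <;> ring,
              norm_smul, hz]; simp [abs_mul]
        _ ≤ _ := norm_sub_le _ _
    have h3 : ‖u - t • z‖ ≤ (1 + ε) * max r |t| := by
      have := keyU (-t)
      simpa [sub_eq_add_neg] using this
    rcases max_cases r |t| with ⟨hM, _⟩ | ⟨hM, _⟩ <;> rw [hM] <;> nlinarith
  · exact keyU t

lemma asq_finite {X : Type*} [NormedAddCommGroup X] [NormedSpace ℝ X] (hX : ASQ X)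
    (S : Set X) (hS : S.Finite) (hU : ∀ v ∈ S, ‖v‖ = 1) {ε : ℝ} (hε : 0 < ε) :
    ∃ z : X, ‖z‖ = 1 ∧ ∀ v ∈ S, ‖v + z‖ ≤ 1 + ε ∧ ‖v - z‖ ≤ 1 + ε := by
  classical
  haveI := hS.fintype
  set T := hS.toFinset with hT
  set e := T.equivFin with he
  set u : Fin T.card → X := fun i => (e.symm i : X) with hu
  have hun : ∀ i, ‖u i‖ = 1 := by
    intro i
    exact hU _ (hS.mem_toFinset.1 (e.symm i).2)
  obtain ⟨y, hy1, hy2, hy3⟩ := hX T.card u hun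
  set δ := min (ε/2) (1/2) with hδ
  have hδ0 : 0 < δ := by positivity
  have hδ2 : δ ≤ 1/2 := min_le_right _ _
  have hδε : 2 * δ ≤ ε := by
    have := min_le_left (ε/2) (1/2); simp only [hδ]; linarith [min_le_left (ε/2) (1/2)]
  have hev : ∀ᶠ n in atTop, (1 - δ < ‖y n‖) ∧
      ∀ i, ‖u i + y n‖ < 1 + δ ∧ ‖u i - y n‖ < 1 + δ := by
    refine (hy2.eventually (eventually_gt_nhds (by linarith))).and (eventually_all.2 fun i => ?_)
    exact ((hy3 i).1.eventually (eventually_lt_nhds (by linarith))).and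
      ((hy3 i).2.eventually (eventually_lt_nhds (by linarith)))
  obtain ⟨N, hN1, hN2⟩ := hev.exists
  have hyN : 0 < ‖y N‖ := by linarith
  refine ⟨‖y N‖⁻¹ • y N, ?_, ?_⟩
  · rw [norm_smul, Real.norm_eq_abs, abs_of_pos (by positivity), inv_mul_cancel₀ hyN.ne']
  · intro v hv
    have hdist : ‖‖y N‖⁻¹ • y N - y N‖ ≤ δ := by
      rw [show ‖y N‖⁻¹ • y N - y N = (‖y N‖⁻¹ - 1) • y N by match_scalars <;> ring,
        norm_smul, Real.norm_eq_abs]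
      have h1 : ‖y N‖ ≤ 1 := hy1 N
      have : (‖y N‖⁻¹ - 1) * ‖y N‖ = 1 - ‖y N‖ := by field_simp
      rw [abs_of_nonneg (by rw [sub_nonneg, one_le_inv_iff₀]; exact ⟨hyN, h1⟩), this]
      linarith
    have hvi : v = u (e ⟨v, hS.mem_toFinset.2 hv⟩) := by
      simp [hu, Equiv.symm_apply_apply]
    obtain ⟨h1, h2⟩ := hN2 (e ⟨v, hS.mem_toFinset.2 hv⟩)
    set w := u (e ⟨v, hS.mem_toFinset.2 hv⟩) with hw
    rw [hvi]
    constructor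
    · have key : w + ‖y N‖⁻¹ • y N = (w + y N) + (‖y N‖⁻¹ • y N - y N) := by abel
      have hle := norm_add_le (w + y N) (‖y N‖⁻¹ • y N - y N)
      rw [← key] at hle
      linarith
    · have key : w - ‖y N‖⁻¹ • y N = (w - y N) - (‖y N‖⁻¹ • y N - y N) := by abel
      have hle := norm_sub_le (w - y N) (‖y N‖⁻¹ • y N - y N)
      rw [← key] at hle
      linarith

set_option maxHeartbeats 1000000 in
lemma step_lemma {X : Type*} [NormedAddCommGroup X] [NormedSpace ℝ X] (hX : ASQ X)
    {m : ℕ} (x : Fin m → X) (hx : ∀ i, ‖x i‖ = 1) (n : ℕ) (w : Fin n → X)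
    {a b η : ℝ} (ha : 2/3 ≤ a) (ha1 : a ≤ 1) (h1b : 1 ≤ b) (hb : b ≤ 4/3) (hη : 0 < η)
    (hP : ∀ l : Fin n → ℝ, a * (⨆ i, |l i|) ≤ ‖∑ i, l i • w i‖ ∧
      ‖∑ i, l i • w i‖ ≤ b * (⨆ i, |l i|)) :
    ∃ z : X, ‖z‖ = 1 ∧ (∀ i, ‖x i + z‖ ≤ 1 + η ∧ ‖x i - z‖ ≤ 1 + η) ∧
      ∀ l : Fin (n+1) → ℝ,
        (a - η) * (⨆ i, |l i|) ≤ ‖∑ i, l i • (Fin.snoc w z : Fin (n+1) → X) i‖ ∧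
        ‖∑ i, l i • (Fin.snoc w z : Fin (n+1) → X) i‖ ≤ (b + η) * (⨆ i, |l i|) := by
  classical
  set ε := min (η/8) (1/2) with hεdef
  have hε0 : 0 < ε := lt_min (by linarith) (by norm_num)
  have hε12 : ε ≤ 1/2 := min_le_right _ _
  have hεη : ε ≤ η/8 := min_le_left _ _
  obtain ⟨G, hG⟩ := grid_lemma hε0
  set net : Finset (Fin n → ℝ) := Fintype.piFinset (fun _ => G) with hnet
  set u : (Fin n → ℝ) → X := fun l => ∑ i, l i • w i with hudef
  set Sset : Set X := Set.range x ∪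
    ((fun l => ‖u l‖⁻¹ • u l) '' {l : Fin n → ℝ | l ∈ net ∧ u l ≠ 0}) with hSset
  have hfin : Sset.Finite := by
    apply (Set.finite_range x).union
    apply Set.Finite.image
    exact net.finite_toSet.subset (fun l hl => hl.1)
  have hunit : ∀ v ∈ Sset, ‖v‖ = 1 := by
    rintro v (⟨i, rfl⟩ | ⟨l, ⟨_, hl⟩, rfl⟩)
    · exact hx i
    · have h0 : 0 < ‖u l‖ := norm_pos_iff.2 hl
      rw [norm_smul, Real.norm_eq_abs, abs_of_pos (by positivity), inv_mul_cancel₀ h0.ne']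
  obtain ⟨z, hz1, hz2⟩ := asq_finite hX Sset hfin hunit hε0
  have hxz : ∀ i, ‖x i + z‖ ≤ 1 + η ∧ ‖x i - z‖ ≤ 1 + η := by
    intro i
    have := hz2 (x i) (Set.mem_union_left _ (Set.mem_range_self i))
    constructor
    · linarith [this.1]
    · linarith [this.2]
  have claim : ∀ (l : Fin n → ℝ) (t : ℝ), max (⨆ i, |l i|) |t| = 1 →
      a - η ≤ ‖u l + t • z‖ ∧ ‖u l + t • z‖ ≤ b + η := by
    intro l t hmax
    set S := ⨆ i, |l i| with hSdef
    have hS0 : 0 ≤ S := csup_nonneg l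
    have hS1 : S ≤ 1 := hmax ▸ le_max_left _ _
    have ht1 : |t| ≤ 1 := hmax ▸ le_max_right _ _
    rcases le_or_gt S ε with hcase | hcase
    · -- Case A : S small, |t| = 1
      have ht : |t| = 1 := by
        rcases max_cases S |t| with ⟨h1, h2⟩ | ⟨h1, _⟩
        · exfalso; rw [hmax] at h1; linarith
        · rw [hmax] at h1; exact h1.symm
      have husm : ‖u l‖ ≤ b * ε :=
        le_trans (hP l).2 (mul_le_mul_of_nonneg_left hcase (by linarith))
      have htz : ‖t • z‖ = 1 := by rw [norm_smul, Real.norm_eq_abs, ht, hz1, mul_one]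
      have hup : ‖u l + t • z‖ ≤ ‖u l‖ + ‖t • z‖ := norm_add_le _ _
      have hlo : ‖t • z‖ - ‖u l‖ ≤ ‖u l + t • z‖ := by
        have h := norm_sub_le (u l + t • z) (u l)
        rw [add_sub_cancel_left] at h
        linarith
      constructor
      · rw [htz] at hlo; nlinarith
      · rw [htz] at hup; nlinarith
    · -- Case B : S > ε, use net point
      have hround : ∀ i, ∃ g ∈ G, |l i - g| ≤ ε := fun i =>
        hG (l i) (le_trans (le_csup l i) hS1)
      choose l' hl'G hl'd using hround
      have hmem : l' ∈ net := by
        rw [hnet, Fintype.mem_piFinset]; exact hl'G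
      set S' := ⨆ i, |l' i| with hS'def
      have hS'0 : 0 ≤ S' := csup_nonneg l'
      have hdsup : (⨆ i, |l i - l' i|) ≤ ε :=
        csup_le hε0.le hl'd
      have hdiff : ‖u l - u l'‖ ≤ b * ε := by
        have h2 := (hP (fun i => l i - l' i)).2
        have hsub : ∑ i, (l i - l' i) • w i = u l - u l' := by
          simp [hudef, sub_smul, Finset.sum_sub_distrib]
        rw [hsub] at h2
        exact le_trans h2 (le_trans (mul_le_mul_of_nonneg_left hdsup (by linarith))
          (le_refl _))
      have hSS'1 : S ≤ S' + ε := by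
        apply csup_le (by linarith)
        intro i
        calc |l i| ≤ |l' i| + |l i - l' i| := by
              have := abs_sub_abs_le_abs_sub (l i) (l' i); linarith [abs_nonneg (l i - l' i),
                abs_sub_le (l i) (l' i) 0]
          _ ≤ S' + ε := add_le_add (le_csup l' i) (hl'd i)
      have hSS'2 : S' ≤ S + ε := by
        apply csup_le (by linarith)
        intro i
        have h1 : |l' i| ≤ |l i| + |l' i - l i| := by
          have := abs_sub_abs_le_abs_sub (l' i) (l i); linarith [abs_nonneg (l' i - l i)]
        have h2 : |l' i - l i| = |l i - l' i| := abs_sub_comm _ _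
        have := hl'd i
        calc |l' i| ≤ |l i| + |l i - l' i| := by rw [← h2]; exact h1
          _ ≤ S + ε := add_le_add (le_csup l i) (hl'd i)
      have hrlb : a * S' ≤ ‖u l'‖ := (hP l').1
      have hrpos : 0 < ‖u l'‖ := by nlinarith
      have hune : u l' ≠ 0 := norm_pos_iff.1 hrpos
      have hnumem : ‖u l'‖⁻¹ • u l' ∈ Sset :=
        Set.mem_union_right _ ⟨l', ⟨hmem, hune⟩, rfl⟩
      obtain ⟨hp, hm⟩ := hz2 _ hnumem
      obtain ⟨hTlo, hTup⟩ := twoVec hε0.le hune hz1 hp hm t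
      have hrub : ‖u l'‖ ≤ b * (S + ε) := le_trans (hP l').2
        (mul_le_mul_of_nonneg_left hSS'2 (by linarith))
      have hMub : max ‖u l'‖ |t| ≤ b * (1 + ε) := by
        apply max_le
        · exact le_trans hrub (by nlinarith)
        · nlinarith
      have htri1 : ‖u l + t • z‖ ≤ ‖u l' + t • z‖ + ‖u l - u l'‖ := by
        have h := norm_add_le (u l' + t • z) (u l - u l')
        have he : (u l' + t • z) + (u l - u l') = u l + t • z := by abel
        rw [he] at h
        linarith [norm_sub_rev (u l) (u l')]
      have htri2 : ‖u l' + t • z‖ - ‖u l - u l'‖ ≤ ‖u l + t • z‖ := by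
        have h := norm_add_le (u l + t • z) (u l' - u l)
        have he : (u l + t • z) + (u l' - u l) = u l' + t • z := by abel
        rw [he] at h
        linarith [norm_sub_rev (u l') (u l)]
      constructor
      · -- lower bound
        have hMlb : a - a * ε ≤ max ‖u l'‖ |t| := by
          rcases max_cases S |t| with ⟨h1, h2⟩ | ⟨h1, h2⟩
          · have hS : S = 1 := by rw [hmax] at h1; exact h1.symm
            have : a * (S - ε) ≤ ‖u l'‖ := by nlinarith
            calc a - a * ε = a * (S - ε) := by rw [hS]; ring
              _ ≤ ‖u l'‖ := this
              _ ≤ max ‖u l'‖ |t| := le_max_left _ _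
          · have hT : |t| = 1 := by rw [hmax] at h1; exact h1.symm
            calc a - a * ε ≤ 1 := by nlinarith
              _ = |t| := hT.symm
              _ ≤ max ‖u l'‖ |t| := le_max_right _ _
        have : (1 - ε) * (a - a * ε) ≤ (1 - ε) * max ‖u l'‖ |t| := by
          apply mul_le_mul_of_nonneg_left hMlb (by linarith)
        nlinarith
      · -- upper bound
        have : (1 + ε) * max ‖u l'‖ |t| ≤ (1 + ε) * (b * (1 + ε)) := by
          apply mul_le_mul_of_nonneg_left hMub (by linarith)
        nlinarith
  refine ⟨z, hz1, hxz, ?_⟩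
  intro l
  set lc : Fin n → ℝ := fun i => l i.castSucc with hlc
  set t := l (Fin.last n) with htdef
  have hsum : ∑ i, l i • (Fin.snoc w z : Fin (n+1) → X) i = u lc + t • z := by
    rw [Fin.sum_univ_castSucc]
    simp only [Fin.snoc_castSucc, Fin.snoc_last, hudef, hlc, htdef]
  have hsup : (⨆ i, |l i|) = max (⨆ i, |lc i|) |t| := csup_succ l
  set M := max (⨆ i, |lc i|) |t| with hMdef
  have hM0 : 0 ≤ M := le_trans (csup_nonneg lc) (le_max_left _ _)
  rcases hM0.eq_or_lt with hM | hM
  · -- M = 0 : everything is zero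
    have hlz : ∀ i : Fin (n+1), l i = 0 := by
      intro i
      have h1 : |l i| ≤ ⨆ j, |l j| := le_csup l i
      rw [hsup, ← hM] at h1
      exact abs_nonpos_iff.1 h1
    have hzero : ∑ i, l i • (Fin.snoc w z : Fin (n+1) → X) i = 0 := by
      apply Finset.sum_eq_zero
      intro i _
      rw [hlz i, zero_smul]
    rw [hzero, norm_zero, hsup, ← hM]
    norm_num
  · -- M > 0 : normalize and apply claim
    set l₁ : Fin n → ℝ := fun i => M⁻¹ * lc i with hl₁
    set t₁ := M⁻¹ * t with ht₁
    have hMinv : 0 ≤ M⁻¹ := by positivity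
    have hmax1 : max (⨆ i, |l₁ i|) |t₁| = 1 := by
      rw [hl₁, ht₁]
      have h1 : (⨆ i, |M⁻¹ * lc i|) = M⁻¹ * ⨆ i, |lc i| := csup_smul lc hMinv
      rw [h1, abs_mul, abs_of_nonneg hMinv, ← mul_max_of_nonneg _ _ hMinv,
        inv_mul_cancel₀ hM.ne']
    have hvec : u l₁ + t₁ • z = M⁻¹ • (u lc + t • z) := by
      rw [hudef, hl₁, ht₁]
      simp only [smul_add, Finset.smul_sum, mul_smul]
    obtain ⟨hclo, hcup⟩ := claim l₁ t₁ hmax1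
    rw [hvec, norm_smul, Real.norm_eq_abs, abs_of_nonneg hMinv] at hclo hcup
    rw [hsum, hsup]
    constructor
    · calc (a - η) * M ≤ (M⁻¹ * ‖u lc + t • z‖) * M :=
            mul_le_mul_of_nonneg_right hclo hM0
        _ = ‖u lc + t • z‖ := by field_simp
    · calc ‖u lc + t • z‖ = (M⁻¹ * ‖u lc + t • z‖) * M := by field_simp
        _ ≤ (b + η) * M := mul_le_mul_of_nonneg_right hcup hM0

lemma buildSeq {X : Type*} [NormedAddCommGroup X] [NormedSpace ℝ X] (hX : ASQ X)
    {m : ℕ} (x : Fin m → X) (hx : ∀ i, ‖x i‖ = 1) :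
    ∃ Z : ℕ → X, (∀ n, ‖Z n‖ = 1) ∧
      (∀ n i, ‖x i + Z n‖ ≤ 1 + (4:ℝ)⁻¹^(n+1) ∧ ‖x i - Z n‖ ≤ 1 + (4:ℝ)⁻¹^(n+1)) ∧
      ∀ (n : ℕ) (l : Fin n → ℝ), 2/3 * (⨆ i, |l i|) ≤ ‖∑ i, l i • Z (i : ℕ)‖ ∧
        ‖∑ i, l i • Z (i : ℕ)‖ ≤ 4/3 * (⨆ i, |l i|) := by
  classical
  set s : ℕ → ℝ := fun n => (1 - (4:ℝ)⁻¹^n)/3 with hsdef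
  have hq1 : ∀ n : ℕ, (0:ℝ) < (4:ℝ)⁻¹^n := fun n => by positivity
  have hq2 : ∀ n : ℕ, (4:ℝ)⁻¹^n ≤ 1 := fun n => pow_le_one₀ (by norm_num) (by norm_num)
  have hs0 : ∀ n, 0 ≤ s n := fun n => by
    have := hq2 n; simp only [hsdef]; linarith
  have hs13 : ∀ n, s n ≤ 1/3 := fun n => by
    have := hq1 n; simp only [hsdef]; linarith
  have hsrec : ∀ n, s (n+1) = s n + (4:ℝ)⁻¹^(n+1) := fun n => by
    simp only [hsdef, pow_succ]; ring
  set Good : ∀ n : ℕ, (Fin n → X) → Prop := fun n w =>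
    (∀ l : Fin n → ℝ, (1 - s n) * (⨆ i, |l i|) ≤ ‖∑ i, l i • w i‖ ∧
      ‖∑ i, l i • w i‖ ≤ (1 + s n) * (⨆ i, |l i|)) ∧
    ∀ k : Fin n, ‖w k‖ = 1 ∧ ∀ i, ‖x i + w k‖ ≤ 1 + (4:ℝ)⁻¹^((k:ℕ)+1) ∧
      ‖x i - w k‖ ≤ 1 + (4:ℝ)⁻¹^((k:ℕ)+1) with hGood
  have base : Good 0 Fin.elim0 := by
    constructor
    · intro l
      simp [Real.iSup_of_isEmpty]
    · intro k; exact k.elim0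
  have stepEx : ∀ (n : ℕ) (w : {w : Fin n → X // Good n w}),
      ∃ w' : {w' : Fin (n+1) → X // Good (n+1) w'},
        ∀ k : Fin n, w'.1 k.castSucc = w.1 k := by
    intro n ⟨w, hw⟩
    obtain ⟨z, hz1, hz2, hz3⟩ := step_lemma hX x hx n w
      (a := 1 - s n) (b := 1 + s n) (η := (4:ℝ)⁻¹^(n+1))
      (by linarith [hs13 n]) (by linarith [hs0 n]) (by linarith [hs0 n])
      (by linarith [hs13 n]) (hq1 (n+1)) hw.1
    refine ⟨⟨Fin.snoc w z, ?_, ?_⟩, fun k => by simp⟩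
    · intro l
      have h := hz3 l
      have e1 : (1 - s n) - (4:ℝ)⁻¹^(n+1) = 1 - s (n+1) := by rw [hsrec]; ring
      have e2 : (1 + s n) + (4:ℝ)⁻¹^(n+1) = 1 + s (n+1) := by rw [hsrec]; ring
      rw [e1, e2] at h
      exact h
    · intro k
      induction k using Fin.lastCases with
      | last =>
        refine ⟨by rw [Fin.snoc_last]; exact hz1, fun i => ?_⟩
        rw [Fin.snoc_last, Fin.val_last]
        exact hz2 i
      | cast j =>
        rw [Fin.snoc_castSucc, Fin.coe_castSucc]
        exact hw.2 j
  choose F hF using stepEx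
  set W : ∀ n : ℕ, {w : Fin n → X // Good n w} :=
    fun n => Nat.rec ⟨Fin.elim0, base⟩ F n with hW
  have hcoh : ∀ (n : ℕ) (k : Fin n), (W (n+1)).1 k.castSucc = (W n).1 k :=
    fun n k => hF n (W n) k
  set Z : ℕ → X := fun k => (W (k+1)).1 (Fin.last k) with hZ
  have hWZ : ∀ (n : ℕ) (k : Fin n), (W n).1 k = Z (k : ℕ) := by
    intro n
    induction n with
    | zero => intro k; exact k.elim0
    | succ n ih =>
      intro k
      induction k using Fin.lastCases with
      | last => simp only [hZ, Fin.val_last]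
      | cast j => rw [hcoh n j, ih j, Fin.coe_castSucc]
  refine ⟨Z, ?_, ?_, ?_⟩
  · intro n
    have h := ((W (n+1)).2.2 (Fin.last n)).1
    exact h
  · intro n i
    have h := ((W (n+1)).2.2 (Fin.last n)).2 i
    rwa [Fin.val_last] at h
  · intro n l
    have h := (W n).2.1 l
    have hsum : ∑ i, l i • Z (i : ℕ) = ∑ i, l i • (W n).1 i :=
      Finset.sum_congr rfl (fun i _ => by rw [hWZ n i])
    rw [hsum]
    have hsup := csup_nonneg l
    constructor
    · refine le_trans ?_ h.1
      apply mul_le_mul_of_nonneg_right _ hsup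
      linarith [hs13 n]
    · refine le_trans h.2 ?_
      apply mul_le_mul_of_nonneg_right _ hsup
      linarith [hs13 n]

/-- Every ASQ Banach space has the sequential SD2P. -/
theorem stmt12 {X : Type*} [NormedAddCommGroup X] [NormedSpace ℝ X] [CompleteSpace X]
    (hX : ASQ X) : SeqSD2P X := by
  intro m x hx
  obtain ⟨Z, hZ1, hZ2, hZ3⟩ := buildSeq hX x hx
  have hq0 : Tendsto (fun n : ℕ => (4:ℝ)⁻¹^(n+1)) atTop (𝓝 0) := by
    have h := tendsto_pow_atTop_nhds_zero_of_lt_one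
      (by norm_num : (0:ℝ) ≤ 4⁻¹) (by norm_num : (4:ℝ)⁻¹ < 1)
    exact h.comp (tendsto_add_atTop_nat 1)
  have hone : Tendsto (fun n : ℕ => 1 + (4:ℝ)⁻¹^(n+1)) atTop (𝓝 1) := by
    simpa using tendsto_const_nhds.add hq0
  have honem : Tendsto (fun n : ℕ => 1 - (4:ℝ)⁻¹^(n+1)) atTop (𝓝 1) := by
    simpa using tendsto_const_nhds.sub hq0
  have hkey : ∀ (i : Fin m) (n : ℕ), 2 ≤ ‖x i + Z n‖ + ‖x i - Z n‖ := by
    intro i n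
    have he : (x i + Z n) + (x i - Z n) = (2:ℝ) • x i := by
      match_scalars <;> ring
    have h := norm_add_le (x i + Z n) (x i - Z n)
    rw [he, norm_smul, Real.norm_eq_abs, hx i] at h
    norm_num at h
    linarith
  refine ⟨fun i _ => x i, Z, fun i _ => hx i, hZ1,
    fun i => Or.inl (by simpa using (tendsto_const_nhds :
      Tendsto (fun _ : ℕ => (0:ℝ)) atTop (𝓝 0))),
    ⟨2/3, 4/3, by norm_num, by norm_num, hZ3⟩, fun i => ⟨?_, ?_⟩⟩
  · apply tendsto_of_tendsto_of_tendsto_of_le_of_le honem hone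
    · intro n
      have h2 := (hZ2 n i).2
      have := hkey i n
      simp only []
      linarith
    · intro n
      exact (hZ2 n i).1
  · apply tendsto_of_tendsto_of_tendsto_of_le_of_le honem hone
    · intro n
      have h1 := (hZ2 n i).1
      have := hkey i n
      simp only []
      linarith
    · intro n
      exact (hZ2 n i).2
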